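/- For every integer a ≥ 1 and n ≥ 1, the diameter of the metallic cube Π^a_n equals a·n − 1. Moreover, the periphery of Π^a_n consists of exactly two vertices: the string obtained by repeating the block 0a, namely (0a)^{n/2} if n is even and (0a)^{(n−1)/2}0 if n is odd, and the string beginning with a−1 followed by alternating blocks, namely (a−1)(0a)^{(n−1)/2} if n is odd and (a−1)(0a)^{(n−2)/2}0 if n is even. -/

import Mathlib

/-- Strings of length `n` over the alphabet `{0,1,…,a}` in which the letter `a`
occurs only immediately after a `0` (i.e. `a` appears only inside blocks `0a`). -/
def MetallicOK (a n : ℕ) (α : Fin n → Fin (a + 1)) : Prop :=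
  ∀ i : Fin n, (α i : ℕ) = a →
    ∃ j : Fin n, (j : ℕ) + 1 = (i : ℕ) ∧ (α j : ℕ) = 0

instance (a n : ℕ) : DecidablePred (MetallicOK a n) := fun α => by
  unfold MetallicOK; infer_instance

/-- Vertices of the metallic cube `Π^a_n`. -/
abbrev MetallicVertex (a n : ℕ) : Type :=
  {α : Fin n → Fin (a + 1) // MetallicOK a n α}

/-- The metallic cube `Π^a_n`: two strings are adjacent iff `Σ_i |α_i - β_i| = 1`. -/
def metallicCube (a n : ℕ) : SimpleGraph (MetallicVertex a n) where
  Adj u v := (∑ i : Fin n, Nat.dist (u.1 i : ℕ) (v.1 i : ℕ)) = 1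
  symm := by
    constructor
    intro u v h
    simpa [Nat.dist_comm] using h
  loopless := by
    constructor
    intro u h
    simp [Nat.dist_self] at h

instance (a n : ℕ) : DecidableRel (metallicCube a n).Adj := fun u v =>
  inferInstanceAs (Decidable ((∑ i : Fin n, Nat.dist (u.1 i : ℕ) (v.1 i : ℕ)) = 1))

/-- The eccentricity of a vertex of the metallic cube: the maximum distance
from `v` to any vertex. -/
noncomputable def ecc (a n : ℕ) (v : MetallicVertex a n) : ℕ :=
  Finset.univ.sup fun u => (metallicCube a n).dist v u

/-- The peripheral vertex `0a0a⋯` : letter `a` at odd (0-indexed) positions,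
letter `0` elsewhere. -/
def periph₁ (a n : ℕ) (ha : 1 ≤ a) : MetallicVertex a n :=
  ⟨fun i => if (i : ℕ) % 2 = 1 then ⟨a, Nat.lt_succ_self a⟩ else ⟨0, Nat.succ_pos a⟩, by
    intro i h
    have hlt := i.isLt
    by_cases hi : (i : ℕ) % 2 = 1
    · refine ⟨⟨(i : ℕ) - 1, by omega⟩, show (i : ℕ) - 1 + 1 = (i : ℕ) by omega, ?_⟩
      have h2 : ¬((i : ℕ) - 1) % 2 = 1 := by omega
      simp only [h2, if_false]
    · simp only [hi, if_false] at h
      exact absurd h.symm (by omega)⟩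

/-- The peripheral vertex `(a−1)0a0a⋯` : letter `a−1` at position `0`, letter `a` at
even (0-indexed) positions `≥ 2`, letter `0` elsewhere. -/
def periph₂ (a n : ℕ) (ha : 1 ≤ a) : MetallicVertex a n :=
  ⟨fun i =>
    if (i : ℕ) = 0 then ⟨a - 1, by omega⟩
    else if (i : ℕ) % 2 = 0 then ⟨a, Nat.lt_succ_self a⟩ else ⟨0, Nat.succ_pos a⟩, by
    intro i h
    have hlt := i.isLt
    by_cases h0 : (i : ℕ) = 0
    · simp only [h0, if_true] at h
      exact absurd h (by omega)
    · by_cases h2 : (i : ℕ) % 2 = 0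
      · refine ⟨⟨(i : ℕ) - 1, by omega⟩, show (i : ℕ) - 1 + 1 = (i : ℕ) by omega, ?_⟩
        have e0 : ¬((i : ℕ) - 1) = 0 := by omega
        have e1 : ¬((i : ℕ) - 1) % 2 = 0 := by omega
        simp only [e0, e1, if_false]
      · simp only [h0, h2, if_false] at h
        exact absurd h.symm (by omega)⟩

namespace MetallicAux

variable {a n : ℕ}

/-- L1 distance between two metallic strings. -/
def L1 (u v : MetallicVertex a n) : ℕ := ∑ i : Fin n, Nat.dist (u.1 i : ℕ) (v.1 i : ℕ)

lemma nat_dist_def (x y : ℕ) : Nat.dist x y = x - y + (y - x) := rfl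

lemma L1_comm (u v : MetallicVertex a n) : L1 u v = L1 v u :=
  Finset.sum_congr rfl fun i _ => Nat.dist_comm _ _

lemma adj_iff {u v : MetallicVertex a n} : (metallicCube a n).Adj u v ↔ L1 u v = 1 := Iff.rfl

lemma L1_triangle (u v w : MetallicVertex a n) : L1 u w ≤ L1 u v + L1 v w := by
  rw [L1, L1, L1, ← Finset.sum_add_distrib]
  exact Finset.sum_le_sum fun i _ => Nat.dist.triangle_inequality _ _ _

lemma length_ge (u v : MetallicVertex a n) (p : (metallicCube a n).Walk u v) :
    L1 u v ≤ p.length := by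
  induction p with
  | nil => simp [L1, Nat.dist_self]
  | @cons x y z h p ih =>
    calc L1 x z ≤ L1 x y + L1 y z := L1_triangle _ _ _
    _ ≤ 1 + p.length := by have := adj_iff.mp h; omega
    _ = (SimpleGraph.Walk.cons h p).length := by simp [Nat.add_comm]

lemma val_le (v : MetallicVertex a n) (i : Fin n) : (v.1 i : ℕ) ≤ a :=
  Nat.lt_succ_iff.mp (v.1 i).isLt

lemma ok_pred (v : MetallicVertex a n) (k : ℕ) (hk : k < n) (h : (v.1 ⟨k, hk⟩ : ℕ) = a) :
    0 < k ∧ ∀ hk' : k - 1 < n, (v.1 ⟨k - 1, hk'⟩ : ℕ) = 0 := by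
  obtain ⟨j, hj1, hj2⟩ := v.2 ⟨k, hk⟩ h
  simp only at hj1
  have hpos : 0 < k := by omega
  refine ⟨hpos, fun hk' => ?_⟩
  have : (⟨k - 1, hk'⟩ : Fin n) = j := by
    apply Fin.ext; simp; omega
  rw [this]; exact hj2

lemma val_zero_lt (v : MetallicVertex a n) (h0 : 0 < n) : (v.1 ⟨0, h0⟩ : ℕ) < a := by
  have hle := val_le v ⟨0, h0⟩
  rcases Nat.lt_or_ge (v.1 ⟨0, h0⟩ : ℕ) a with h | h
  · exact h
  · have heq : (v.1 ⟨0, h0⟩ : ℕ) = a := le_antisymm hle h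
    obtain ⟨j, hj1, _⟩ := v.2 ⟨0, h0⟩ heq
    simp only at hj1
    omega

/-- One step towards `v`. -/
lemma step (u v : MetallicVertex a n) (h : L1 u v ≠ 0) :
    ∃ w : MetallicVertex a n, (metallicCube a n).Adj u w ∧ L1 w v + 1 = L1 u v := by
  have hex : ∃ i : Fin n, Nat.dist (u.1 i : ℕ) (v.1 i : ℕ) ≠ 0 := by
    by_contra hc
    push_neg at hc
    exact h (Finset.sum_eq_zero fun i _ => hc i)
  -- in both cases we will move coordinate `i` by one towards `v`, to new value `b`
  suffices hsuf : ∃ (i : Fin n) (b : Fin (a+1)),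
      Nat.dist (u.1 i : ℕ) (b : ℕ) = 1 ∧
      Nat.dist (b : ℕ) (v.1 i : ℕ) + 1 = Nat.dist (u.1 i : ℕ) (v.1 i : ℕ) ∧
      MetallicOK a n (fun j => if j = i then b else u.1 j) by
    obtain ⟨i, b, hb1, hb2, hok⟩ := hsuf
    refine ⟨⟨fun j => if j = i then b else u.1 j, hok⟩, ?_, ?_⟩
    · show (∑ j : Fin n, Nat.dist (u.1 j : ℕ)
          (((fun j => if j = i then b else u.1 j) j : Fin (a+1)) : ℕ)) = 1
      rw [Fintype.sum_eq_single i]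
      · simpa using hb1
      · intro j hji
        simp [hji]
    · show (∑ j : Fin n, Nat.dist (((fun j => if j = i then b else u.1 j) j : Fin (a+1)) : ℕ)
          (v.1 j : ℕ)) + 1 = ∑ j : Fin n, Nat.dist (u.1 j : ℕ) (v.1 j : ℕ)
      have hcongr : ∀ j : Fin n, Nat.dist (u.1 j : ℕ) (v.1 j : ℕ) =
          Nat.dist (((fun j => if j = i then b else u.1 j) j : Fin (a+1)) : ℕ) (v.1 j : ℕ)
          + (if j = i then 1 else 0) := by
        intro j
        by_cases hji : j = i
        · subst hji
          simpa using hb2.symm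
        · simp [hji]
      rw [Finset.sum_congr rfl fun j _ => hcongr j, Finset.sum_add_distrib]
      simp
  by_cases hcase : ∃ i : Fin n, (v.1 i : ℕ) < (u.1 i : ℕ)
  · -- decrease coordinate i
    obtain ⟨i, hi⟩ := hcase
    refine ⟨i, ⟨(u.1 i : ℕ) - 1, lt_of_le_of_lt (Nat.sub_le _ _) (u.1 i).isLt⟩, ?_, ?_, ?_⟩
    · rw [nat_dist_def]; simp; omega
    · rw [nat_dist_def, nat_dist_def]; simp; omega
    · intro j hj
      beta_reduce at hj
      by_cases hji : j = i
      · subst hji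
        rw [if_pos rfl] at hj
        simp only [Fin.val_mk] at hj
        have := val_le u j
        omega
      · rw [if_neg hji] at hj
        obtain ⟨k, hk1, hk2⟩ := u.2 j hj
        have hki : k ≠ i := fun hc => by subst hc; omega
        exact ⟨k, hk1, by beta_reduce; rw [if_neg hki]; exact hk2⟩
  · -- increase some coordinate
    push_neg at hcase
    obtain ⟨i, hi0⟩ := hex
    have hi : (u.1 i : ℕ) < (v.1 i : ℕ) := by
      have := hcase i
      rw [nat_dist_def] at hi0
      omega
    have hva := val_le v i
    refine ⟨i, ⟨(u.1 i : ℕ) + 1, by omega⟩, ?_, ?_, ?_⟩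
    · rw [nat_dist_def]; simp
    · rw [nat_dist_def, nat_dist_def]; simp; omega
    · intro j hj
      beta_reduce at hj
      by_cases hji : j = i
      · subst hji
        rw [if_pos rfl] at hj
        simp only [Fin.val_mk] at hj
        have hv : (v.1 j : ℕ) = a := by omega
        obtain ⟨hpos, hpred⟩ := ok_pred v (j : ℕ) j.isLt (by convert hv using 2)
        have hlt' : (j : ℕ) - 1 < n := by have := j.isLt; omega
        have hup : (u.1 ⟨(j : ℕ) - 1, hlt'⟩ : ℕ) = 0 := by
          have h1 := hcase ⟨(j : ℕ) - 1, hlt'⟩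
          have h2 := hpred hlt'
          omega
        have hji' : (⟨(j : ℕ) - 1, hlt'⟩ : Fin n) ≠ j := by
          intro hc
          have : (j : ℕ) - 1 = (j : ℕ) := congrArg Fin.val hc
          omega
        exact ⟨⟨(j : ℕ) - 1, hlt'⟩, by simp; omega, by beta_reduce; rw [if_neg hji']; exact hup⟩
      · rw [if_neg hji] at hj
        obtain ⟨k, hk1, hk2⟩ := u.2 j hj
        have hki : k ≠ i := by
          intro hc
          subst hc
          have hvj : (v.1 j : ℕ) = a := by
            have := hcase j
            omega
          obtain ⟨hpos, hpred⟩ := ok_pred v (j : ℕ) j.isLt (by convert hvj using 2)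
          have hlt' : (j : ℕ) - 1 < n := by have := j.isLt; omega
          have h2 := hpred hlt'
          have hkj : k = (⟨(j : ℕ) - 1, hlt'⟩ : Fin n) := by
            apply Fin.ext; simp; omega
          rw [hkj] at hk2 hi
          omega
        exact ⟨k, hk1, by beta_reduce; rw [if_neg hki]; exact hk2⟩

lemma walk_exists (u v : MetallicVertex a n) :
    ∃ p : (metallicCube a n).Walk u v, p.length = L1 u v := by
  generalize hN : L1 u v = N
  induction N generalizing u with
  | zero =>
    have huv : u = v := by
      apply Subtype.ext
      funext i
      apply Fin.ext
      apply Nat.eq_of_dist_eq_zero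
      by_contra hc
      have : 0 < L1 u v := by
        rw [L1]
        exact Finset.sum_pos' (fun j _ => Nat.zero_le _) ⟨i, Finset.mem_univ i, by omega⟩
      omega
    subst huv
    exact ⟨SimpleGraph.Walk.nil, rfl⟩
  | succ N ih =>
    obtain ⟨w, hadj, hw⟩ := step u v (by omega)
    obtain ⟨p, hp⟩ := ih w (by omega)
    exact ⟨SimpleGraph.Walk.cons hadj p, by simp [hp]⟩

lemma dist_eq (u v : MetallicVertex a n) : (metallicCube a n).dist u v = L1 u v := by
  obtain ⟨p, hp⟩ := walk_exists u v
  have h1 : (metallicCube a n).dist u v ≤ L1 u v := hp ▸ SimpleGraph.dist_le p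
  obtain ⟨q, hq⟩ := SimpleGraph.Reachable.exists_walk_length_eq_dist ⟨p⟩
  have h2 := length_ge u v q
  omega

lemma dist_le_a (u v : MetallicVertex a n) (i : Fin n) :
    Nat.dist (u.1 i : ℕ) (v.1 i : ℕ) ≤ a := by
  have h1 := val_le u i
  have h2 := val_le v i
  rw [nat_dist_def]
  omega

lemma periph₁_val (ha : 1 ≤ a) (i : Fin n) :
    ((periph₁ a n ha).1 i : ℕ) = if (i : ℕ) % 2 = 1 then a else 0 := by
  by_cases h : (i : ℕ) % 2 = 1 <;> simp [periph₁, h]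

lemma periph₂_val (ha : 1 ≤ a) (i : Fin n) :
    ((periph₂ a n ha).1 i : ℕ) =
      if (i : ℕ) = 0 then a - 1 else if (i : ℕ) % 2 = 0 then a else 0 := by
  by_cases h0 : (i : ℕ) = 0
  · simp [periph₂, h0]
  · by_cases h2 : (i : ℕ) % 2 = 0 <;> simp [periph₂, h0, h2]

lemma fin_zero_eq {m : ℕ} : (0 : Fin (m+1)) = ⟨0, Nat.succ_pos m⟩ := rfl

lemma L1_le (ha : 1 ≤ a) {m : ℕ} (u v : MetallicVertex a (m+1)) :
    L1 u v ≤ a * (m+1) - 1 := by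
  rw [L1, Fin.sum_univ_succ]
  have h1 := val_zero_lt u (Nat.succ_pos m)
  have h2 := val_zero_lt v (Nat.succ_pos m)
  have h0 : Nat.dist (u.1 (0 : Fin (m+1)) : ℕ) (v.1 (0 : Fin (m+1)) : ℕ) ≤ a - 1 := by
    rw [fin_zero_eq, nat_dist_def]
    omega
  have hs : ∑ i : Fin m, Nat.dist (u.1 i.succ : ℕ) (v.1 i.succ : ℕ) ≤ m * a := by
    calc ∑ i : Fin m, Nat.dist (u.1 i.succ : ℕ) (v.1 i.succ : ℕ)
        ≤ ∑ _i : Fin m, a := Finset.sum_le_sum fun i _ => dist_le_a u v i.succ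
      _ = m * a := by simp [Finset.sum_const, mul_comm]
  have hma : a * (m + 1) = a * m + a := by ring
  have hcm : m * a = a * m := Nat.mul_comm m a
  omega

lemma L1_periph (ha : 1 ≤ a) {m : ℕ} :
    L1 (periph₁ a (m+1) ha) (periph₂ a (m+1) ha) = a * (m+1) - 1 := by
  rw [L1, Fin.sum_univ_succ]
  have h0 : Nat.dist ((periph₁ a (m+1) ha).1 (0 : Fin (m+1)) : ℕ)
      ((periph₂ a (m+1) ha).1 (0 : Fin (m+1)) : ℕ) = a - 1 := by
    rw [periph₁_val, periph₂_val]
    simp [Nat.dist_zero_left]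
  have hterm : ∀ i : Fin m, Nat.dist ((periph₁ a (m+1) ha).1 i.succ : ℕ)
      ((periph₂ a (m+1) ha).1 i.succ : ℕ) = a := by
    intro i
    rw [periph₁_val, periph₂_val]
    have hs : ((i.succ : Fin (m+1)) : ℕ) = (i : ℕ) + 1 := rfl
    rw [hs]
    by_cases h : ((i : ℕ) + 1) % 2 = 1
    · have h' : ¬((i : ℕ) + 1) = 0 := by omega
      have h'' : ¬((i : ℕ) + 1) % 2 = 0 := by omega
      simp [h, h', h'', Nat.dist_zero_right]
    · have h' : ¬((i : ℕ) + 1) = 0 := by omega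
      have h'' : ((i : ℕ) + 1) % 2 = 0 := by omega
      simp [h, h', h'', Nat.dist_zero_left]
  rw [h0, Finset.sum_congr rfl fun i _ => hterm i]
  simp only [Finset.sum_const, Finset.card_univ, Fintype.card_fin, smul_eq_mul]
  have hma : a * (m + 1) = a * m + a := by ring
  have hcm : m * a = a * m := Nat.mul_comm m a
  omega

/-- From the alternation forced by extremal distance, identify the two strings. -/
lemma build (ha : 1 ≤ a) {m : ℕ} (u v : MetallicVertex a (m+1))
    (hD : ∀ k, ∀ hlt : k < m + 1, k ≠ 0 →
      ((u.1 ⟨k, hlt⟩ : ℕ) = 0 ∧ (v.1 ⟨k, hlt⟩ : ℕ) = a) ∨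
      ((u.1 ⟨k, hlt⟩ : ℕ) = a ∧ (v.1 ⟨k, hlt⟩ : ℕ) = 0))
    (h0 : Nat.dist (u.1 ⟨0, Nat.succ_pos m⟩ : ℕ) (v.1 ⟨0, Nat.succ_pos m⟩ : ℕ) = a - 1)
    (hm : 0 < m) (hv1 : ∀ hlt : 1 < m + 1, (v.1 ⟨1, hlt⟩ : ℕ) = a) :
    u = periph₂ a (m+1) ha ∧ v = periph₁ a (m+1) ha := by
  have hm1 : 1 < m + 1 := by omega
  have alt : ∀ k, ∀ hlt : k < m + 1, k ≠ 0 →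
      ((v.1 ⟨k, hlt⟩ : ℕ) = if k % 2 = 1 then a else 0) ∧
      ((u.1 ⟨k, hlt⟩ : ℕ) = if k % 2 = 1 then 0 else a) := by
    intro k
    induction k using Nat.strong_induction_on with
    | _ k ih =>
      intro hlt hk0
      rcases Nat.lt_or_ge k 2 with h2 | h2
      · have hk1 : k = 1 := by omega
        subst hk1
        have hd := hD 1 hlt (by omega)
        have hv1' := hv1 hlt
        simp only [Nat.one_mod, if_pos rfl]
        rcases hd with ⟨hu', hv'⟩ | ⟨hu', hv'⟩
        · exact ⟨hv', hu'⟩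
        · omega
      · have hlt' : k - 1 < m + 1 := by omega
        have ihp := ih (k - 1) (by omega) hlt' (by omega)
        have hd := hD k hlt hk0
        by_cases hpar : k % 2 = 1
        · -- k odd, k-1 even : u_{k-1} = a; exclude u_k = a
          have hprev : ¬((k - 1) % 2 = 1) := by omega
          have hu' : (u.1 ⟨k - 1, hlt'⟩ : ℕ) = a := by
            have := ihp.2
            rwa [if_neg hprev] at this
          rcases hd with ⟨h1', h2'⟩ | ⟨h1', h2'⟩
          · simp only [if_pos hpar]
            exact ⟨h2', h1'⟩
          · obtain ⟨-, hpred⟩ := ok_pred u k hlt h1'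
            have := hpred hlt'
            omega
        · -- k even, k-1 odd : v_{k-1} = a; exclude v_k = a
          have hprev : (k - 1) % 2 = 1 := by omega
          have hv' : (v.1 ⟨k - 1, hlt'⟩ : ℕ) = a := by
            have := ihp.1
            rwa [if_pos hprev] at this
          rcases hd with ⟨h1', h2'⟩ | ⟨h1', h2'⟩
          · obtain ⟨-, hpred⟩ := ok_pred v k hlt h2'
            have := hpred hlt'
            omega
          · simp only [if_neg hpar]
            exact ⟨h2', h1'⟩
  have hv0 : (v.1 ⟨0, Nat.succ_pos m⟩ : ℕ) = 0 := by
    obtain ⟨-, hpred⟩ := ok_pred v 1 hm1 (hv1 hm1)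
    exact hpred (Nat.succ_pos m)
  have hu0 : (u.1 ⟨0, Nat.succ_pos m⟩ : ℕ) = a - 1 := by
    have h1 := val_zero_lt u (Nat.succ_pos m)
    rw [nat_dist_def] at h0
    omega
  constructor
  · apply Subtype.ext
    funext i
    apply Fin.ext
    rw [periph₂_val]
    by_cases hi0 : (i : ℕ) = 0
    · have hieq : i = ⟨0, Nat.succ_pos m⟩ := Fin.ext hi0
      rw [hieq, if_pos rfl]
      exact hu0
    · have halt := (alt (i : ℕ) i.isLt hi0).2
      rw [if_neg hi0]
      simp only [Fin.eta] at halt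
      by_cases hp : (i : ℕ) % 2 = 1
      · rw [if_pos hp] at halt
        rw [if_neg (by omega : ¬((i : ℕ) % 2 = 0))]
        exact halt
      · rw [if_neg hp] at halt
        rw [if_pos (by omega : (i : ℕ) % 2 = 0)]
        exact halt
  · apply Subtype.ext
    funext i
    apply Fin.ext
    rw [periph₁_val]
    by_cases hi0 : (i : ℕ) = 0
    · have hieq : i = ⟨0, Nat.succ_pos m⟩ := Fin.ext hi0
      rw [hieq, if_neg (by simp : ¬((0 : ℕ) % 2 = 1))]
      exact hv0
    · have halt := (alt (i : ℕ) i.isLt hi0).1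
      simp only [Fin.eta] at halt
      exact halt

lemma eq_periph (ha : 1 ≤ a) {m : ℕ} (u v : MetallicVertex a (m+1))
    (h : L1 u v = a * (m+1) - 1) :
    (u = periph₁ a (m+1) ha ∧ v = periph₂ a (m+1) ha) ∨
    (u = periph₂ a (m+1) ha ∧ v = periph₁ a (m+1) ha) := by
  -- extract the per-coordinate equalities
  rw [L1, Fin.sum_univ_succ] at h
  have hub0 : Nat.dist (u.1 (0 : Fin (m+1)) : ℕ) (v.1 (0 : Fin (m+1)) : ℕ) ≤ a - 1 := by
    have h1 := val_zero_lt u (Nat.succ_pos m)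
    have h2 := val_zero_lt v (Nat.succ_pos m)
    rw [fin_zero_eq, nat_dist_def]
    omega
  have hsle : ∑ i : Fin m, Nat.dist (u.1 i.succ : ℕ) (v.1 i.succ : ℕ) ≤ m * a := by
    calc ∑ i : Fin m, Nat.dist (u.1 i.succ : ℕ) (v.1 i.succ : ℕ)
        ≤ ∑ _i : Fin m, a := Finset.sum_le_sum fun i _ => dist_le_a u v i.succ
      _ = m * a := by simp [Finset.sum_const, mul_comm]
  have hma : a * (m + 1) = a * m + a := by ring
  have hcm : m * a = a * m := Nat.mul_comm m a
  have h0 : Nat.dist (u.1 (0 : Fin (m+1)) : ℕ) (v.1 (0 : Fin (m+1)) : ℕ) = a - 1 := by omega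
  have hS : ∑ i : Fin m, Nat.dist (u.1 i.succ : ℕ) (v.1 i.succ : ℕ) = m * a := by omega
  have hsucc : ∀ i : Fin m, Nat.dist (u.1 i.succ : ℕ) (v.1 i.succ : ℕ) = a := by
    by_contra hc
    push_neg at hc
    obtain ⟨j, hj⟩ := hc
    have hlt : ∑ i : Fin m, Nat.dist (u.1 i.succ : ℕ) (v.1 i.succ : ℕ) < ∑ _i : Fin m, a := by
      refine Finset.sum_lt_sum (fun i _ => dist_le_a u v i.succ) ⟨j, Finset.mem_univ j, ?_⟩
      have := dist_le_a u v j.succ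
      omega
    rw [Finset.sum_const, Finset.card_univ, Fintype.card_fin, smul_eq_mul] at hlt
    omega
  have hD : ∀ k, ∀ hlt : k < m + 1, k ≠ 0 →
      ((u.1 ⟨k, hlt⟩ : ℕ) = 0 ∧ (v.1 ⟨k, hlt⟩ : ℕ) = a) ∨
      ((u.1 ⟨k, hlt⟩ : ℕ) = a ∧ (v.1 ⟨k, hlt⟩ : ℕ) = 0) := by
    intro k hlt hk0
    have hk1 : k - 1 < m := by omega
    have hd := hsucc ⟨k - 1, hk1⟩
    have hidx : ((⟨k - 1, hk1⟩ : Fin m).succ) = (⟨k, hlt⟩ : Fin (m+1)) := by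
      apply Fin.ext
      simp
      omega
    rw [hidx] at hd
    have h1 := val_le u ⟨k, hlt⟩
    have h2 := val_le v ⟨k, hlt⟩
    rw [nat_dist_def] at hd
    omega
  have h0' : Nat.dist (u.1 ⟨0, Nat.succ_pos m⟩ : ℕ) (v.1 ⟨0, Nat.succ_pos m⟩ : ℕ) = a - 1 := h0
  rcases Nat.eq_zero_or_pos m with hm | hm
  · -- n = 1 : only position 0
    subst hm
    have h1 := val_zero_lt u (Nat.succ_pos 0)
    have h2 := val_zero_lt v (Nat.succ_pos 0)
    rw [nat_dist_def] at h0'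
    have hcases : ((u.1 ⟨0, Nat.succ_pos 0⟩ : ℕ) = 0 ∧ (v.1 ⟨0, Nat.succ_pos 0⟩ : ℕ) = a - 1) ∨
        ((u.1 ⟨0, Nat.succ_pos 0⟩ : ℕ) = a - 1 ∧ (v.1 ⟨0, Nat.succ_pos 0⟩ : ℕ) = 0) := by
      omega
    have hall : ∀ i : Fin 1, i = ⟨0, Nat.succ_pos 0⟩ := by
      intro i
      apply Fin.ext
      have := i.isLt
      omega
    rcases hcases with ⟨hu', hv'⟩ | ⟨hu', hv'⟩
    · left
      constructor <;> apply Subtype.ext <;> funext i <;> apply Fin.ext <;> rw [hall i]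
      · rw [periph₁_val]
        simpa using hu'
      · rw [periph₂_val]
        simpa using hv'
    · right
      constructor <;> apply Subtype.ext <;> funext i <;> apply Fin.ext <;> rw [hall i]
      · rw [periph₂_val]
        simpa using hu'
      · rw [periph₁_val]
        simpa using hv'
  · -- n ≥ 2 : split on the value at position 1
    have hm1 : 1 < m + 1 := by omega
    rcases hD 1 hm1 (by omega) with ⟨hu1, hv1⟩ | ⟨hu1, hv1⟩
    · -- v has `a` at position 1
      right
      have := build ha u v hD h0' hm (fun hlt => hv1)
      exact ⟨this.1, this.2⟩
    · -- u has `a` at position 1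
      left
      have hD' : ∀ k, ∀ hlt : k < m + 1, k ≠ 0 →
          ((v.1 ⟨k, hlt⟩ : ℕ) = 0 ∧ (u.1 ⟨k, hlt⟩ : ℕ) = a) ∨
          ((v.1 ⟨k, hlt⟩ : ℕ) = a ∧ (u.1 ⟨k, hlt⟩ : ℕ) = 0) := by
        intro k hlt hk0
        rcases hD k hlt hk0 with ⟨ha', hb'⟩ | ⟨ha', hb'⟩
        · exact Or.inr ⟨hb', ha'⟩
        · exact Or.inl ⟨hb', ha'⟩
      have h0'' : Nat.dist (v.1 ⟨0, Nat.succ_pos m⟩ : ℕ) (u.1 ⟨0, Nat.succ_pos m⟩ : ℕ) = a - 1 := by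
        rw [Nat.dist_comm]
        exact h0'
      have := build ha v u hD' h0'' hm (fun hlt => hu1)
      exact ⟨this.2, this.1⟩

end MetallicAux

/-- the diameter of `Π^a_n` equals `a·n − 1`, and the periphery
consists of the two vertices `0a0a⋯` and `(a−1)0a0a⋯`. -/
theorem metallic_diameter_periphery (a n : ℕ) (ha : 1 ≤ a) (hn : 1 ≤ n) :
    (∀ u v : MetallicVertex a n, (metallicCube a n).dist u v ≤ a * n - 1) ∧
    (∀ v : MetallicVertex a n,
      ecc a n v = a * n - 1 ↔ (v = periph₁ a n ha ∨ v = periph₂ a n ha)) := by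
  obtain ⟨m, rfl⟩ : ∃ m, n = m + 1 := ⟨n - 1, by omega⟩
  constructor
  · intro u v
    rw [MetallicAux.dist_eq]
    exact MetallicAux.L1_le ha u v
  · intro v
    have hub : ∀ u, (metallicCube a (m+1)).dist v u ≤ a * (m+1) - 1 := fun u => by
      rw [MetallicAux.dist_eq]
      exact MetallicAux.L1_le ha v u
    have hle : ecc a (m+1) v ≤ a * (m+1) - 1 := Finset.sup_le fun u _ => hub u
    constructor
    · intro hecc
      have hne : (Finset.univ : Finset (MetallicVertex a (m+1))).Nonempty :=
        ⟨periph₁ a (m+1) ha, Finset.mem_univ _⟩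
      obtain ⟨u, -, hu⟩ := Finset.exists_mem_eq_sup Finset.univ hne
        (fun u => (metallicCube a (m+1)).dist v u)
      have hdist : (metallicCube a (m+1)).dist v u = a * (m+1) - 1 := by
        rw [← hu]
        exact hecc
      rw [MetallicAux.dist_eq] at hdist
      rcases MetallicAux.eq_periph ha v u hdist with ⟨h1, -⟩ | ⟨h1, -⟩
      · exact Or.inl h1
      · exact Or.inr h1
    · intro hv
      have hge : a * (m+1) - 1 ≤ ecc a (m+1) v := by
        rcases hv with rfl | rfl
        · have hd : (metallicCube a (m+1)).dist (periph₁ a (m+1) ha) (periph₂ a (m+1) ha)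
              = a * (m+1) - 1 := by
            rw [MetallicAux.dist_eq]
            exact MetallicAux.L1_periph ha
          calc a * (m+1) - 1 = _ := hd.symm
            _ ≤ _ := Finset.le_sup (Finset.mem_univ (periph₂ a (m+1) ha))
        · have hd : (metallicCube a (m+1)).dist (periph₂ a (m+1) ha) (periph₁ a (m+1) ha)
              = a * (m+1) - 1 := by
            rw [MetallicAux.dist_eq, MetallicAux.L1_comm]
            exact MetallicAux.L1_periph ha
          calc a * (m+1) - 1 = _ := hd.symm
            _ ≤ _ := Finset.le_sup (Finset.mem_univ (periph₁ a (m+1) ha))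
      omega
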